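/- For the van der Waals equation of state in one variable, the function n ↦ n·ln((1−n)/n) is concave on (0,1); that is, for all n₁, n₂ ∈ (0,1), n₂·ln((1−n₂)/n₂) − n₁·ln((1−n₁)/n₁) ≥ (ln((1−n₂)/n₂) − 1/(1−n₂))·(n₂ − n₁). -/

import Mathlib

lemma log_ge_one_sub_inv {x : ℝ} (hx : 0 < x) : 1 - 1/x ≤ Real.log x := by
  have h := Real.log_le_sub_one_of_pos (x := 1/x) (by positivity)
  rw [one_div, Real.log_inv] at h
  rw [← one_div] at h
  linarith

/-- First-order concavity inequality for g(n) = n·ln((1−n)/n) on (0,1). -/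
theorem vdw_entropy_concavity
    (n₁ n₂ : ℝ) (h₁ : n₁ ∈ Set.Ioo (0:ℝ) 1) (h₂ : n₂ ∈ Set.Ioo (0:ℝ) 1) :
    n₂ * Real.log ((1 - n₂) / n₂) - n₁ * Real.log ((1 - n₁) / n₁)
      ≥ (Real.log ((1 - n₂) / n₂) - 1 / (1 - n₂)) * (n₂ - n₁) := by
  obtain ⟨ha, hb⟩ := h₁
  obtain ⟨hc, hd⟩ := h₂
  have ha' : (0:ℝ) < 1 - n₁ := by linarith
  have hc' : (0:ℝ) < 1 - n₂ := by linarith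
  rw [Real.log_div (by linarith) (by linarith), Real.log_div (by linarith) (by linarith)]
  have hA : 1 - (1 - n₁)/(1 - n₂) ≤ Real.log (1 - n₂) - Real.log (1 - n₁) := by
    have := log_ge_one_sub_inv (x := (1 - n₂)/(1 - n₁)) (by positivity)
    rw [Real.log_div (by linarith) (by linarith), one_div_div] at this
    linarith
  have hB : 1 - n₂/n₁ ≤ Real.log n₁ - Real.log n₂ := by
    have := log_ge_one_sub_inv (x := n₁/n₂) (by positivity)
    rw [Real.log_div (by linarith) (by linarith), one_div_div] at this
    linarith
  have e1 : (1 - (1 - n₁)/(1 - n₂)) * (1 - n₂) = n₁ - n₂ := by field_simp; ring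
  have e2 : (1 - n₂/n₁) * n₁ = n₁ - n₂ := by field_simp
  have e3 : (1/(1 - n₂)) * (1 - n₂) = 1 := by field_simp
  have hA' := mul_le_mul_of_nonneg_left hA ha.le
  have hB' := mul_le_mul_of_nonneg_left hB ha.le
  have e1 : ((1 - n₁)/(1 - n₂)) * (1 - n₂) = 1 - n₁ := by field_simp
  have e2 : (n₂/n₁) * n₁ = n₂ := by field_simp
  have e3 : (1/(1 - n₂)) * (1 - n₂) = 1 := by field_simp
  nlinarith [mul_le_mul_of_nonneg_right hA' hc'.le,
    mul_le_mul_of_nonneg_right hB' hc'.le,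
    sq_nonneg (n₁ - n₂), mul_pos ha hc', hc',
    mul_le_mul_of_nonneg_right hA' ha.le]
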